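/- In the game i-MARK({1},{2,3}), convergence occurs in at most 64 steps at every starting position n ∈ ℕ. -/
import Mathlib


/-- The minimum excludant of a set of naturals. -/
noncomputable def mex (T : Set ℕ) : ℕ := sInf {k : ℕ | k ∉ T}

/-- The set of followers of position `n` in the game i-MARK(S,D):
`n - s` for `s ∈ S` with `0 < s ≤ n`, and `n / d` for `d ∈ D` with `2 ≤ d`, `0 < n`, `d ∣ n`. -/
def followers (S D : Finset ℕ) (n : ℕ) : Finset ℕ :=
  ((S.filter fun s => 0 < s ∧ s ≤ n).image fun s => n - s) ∪
  ((D.filter fun d => 2 ≤ d ∧ 0 < n ∧ d ∣ n).image fun d => n / d)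

theorem followers_lt {S D : Finset ℕ} {n m : ℕ} (h : m ∈ followers S D n) : m < n := by
  simp only [followers, Finset.mem_union, Finset.mem_image, Finset.mem_filter] at h
  rcases h with ⟨s, ⟨-, hs, hsn⟩, rfl⟩ | ⟨d, ⟨-, hd, hn, -⟩, rfl⟩
  · omega
  · exact Nat.div_lt_self hn (by omega)

/-- The Sprague–Grundy function of i-MARK(S,D). -/
noncomputable def grundy (S D : Finset ℕ) : ℕ → ℕ
  | n => mex ↑((followers S D n).attach.image fun m => grundy S D m.1)
decreasing_by exact followers_lt m.2

/-- The number of followers of position `n` in i-MARK(S,D) (for positive `S` and `D` with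
elements `≥ 2`): `φ(0) = 0` and `φ(n) = #{s ∈ S : s ≤ n} + #{d ∈ D : d ∣ n}` for `n > 0`. -/
def numFollowers (S D : Finset ℕ) (n : ℕ) : ℕ :=
  if n = 0 then 0 else (S.filter fun s => s ≤ n).card + (D.filter fun d => d ∣ n).card

/-- `σ : ℕ → ℕ` is a guess seed for starting position `n` in i-MARK(S,D) if
`σ i ≤ φ(i)` for all `n ≤ i < n + max S` (values of `σ` outside this window are irrelevant). -/
def IsGuessSeed (S D : Finset ℕ) (n : ℕ) (σ : ℕ → ℕ) : Prop :=
  ∀ i, n ≤ i → i < n + S.sup id → σ i ≤ numFollowers S D i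

/-- The guess sequence generated by seed `σ` from starting position `n`: it equals `σ` on
`[n, n + max S)`, and from `n + max S` on it is computed by the mex rule, using guessed values
for subtraction followers and true Grundy values for division followers. -/
noncomputable def guessSeq (S D : Finset ℕ) (n : ℕ) (σ : ℕ → ℕ) : ℕ → ℕ
  | m =>
    if m < n + S.sup id then σ m
    else
      mex ((↑((S.filter fun t => 0 < t ∧ t ≤ m).attach.image
              fun t => guessSeq S D n σ (m - t.1)) : Set ℕ) ∪
        {g | ∃ d ∈ D, 2 ≤ d ∧ 0 < m ∧ d ∣ m ∧ g = grundy S D (m / d)})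
decreasing_by
  have ht := t.2
  simp only [Finset.mem_filter] at ht
  omega

-- Auxiliary lemmas
-- mex lemmas
lemma mex_notMem {T : Set ℕ} (h : T.Finite) : mex T ∉ T := by
  have hne : {k : ℕ | k ∉ T}.Nonempty := by
    obtain ⟨k, hk⟩ := h.infinite_compl.nonempty
    exact ⟨k, hk⟩
  exact Nat.sInf_mem hne

lemma mex_ne_zero {T : Set ℕ} (h : T.Finite) (h0 : 0 ∈ T) : mex T ≠ 0 :=
  fun he => (he ▸ mex_notMem h) h0

lemma mex_eq_zero {T : Set ℕ} (h0 : 0 ∉ T) : mex T = 0 :=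
  Nat.le_zero.mp (Nat.sInf_le h0)

lemma zero_mem_of_mex_ne_zero {T : Set ℕ} (h : mex T ≠ 0) : 0 ∈ T :=
  by_contra fun h0 => h (mex_eq_zero h0)

-- Dset
def Dset (m : ℕ) : Set ℕ :=
  {g | ∃ d ∈ ({2, 3} : Finset ℕ), 2 ≤ d ∧ 0 < m ∧ d ∣ m ∧ g = grundy {1} {2, 3} (m / d)}

lemma Dset_subset (m : ℕ) :
    Dset m ⊆ {grundy {1} {2,3} (m/2), grundy {1} {2,3} (m/3)} := by
  rintro g ⟨d, hd, -, -, -, rfl⟩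
  simp only [Finset.mem_insert, Finset.mem_singleton] at hd
  rcases hd with rfl | rfl
  · exact Or.inl rfl
  · exact Or.inr rfl

lemma Dset_finite (m : ℕ) : (Dset m).Finite :=
  Set.Finite.subset ((Set.finite_singleton _).insert _) (Dset_subset m)

lemma union_Dset_finite (x m : ℕ) : (({x} : Set ℕ) ∪ Dset m).Finite :=
  (Set.finite_singleton x).union (Dset_finite m)

lemma mem_Dset_two {m : ℕ} (hm : 0 < m) (h2 : 2 ∣ m) : grundy {1} {2,3} (m/2) ∈ Dset m :=
  ⟨2, by decide, by norm_num, hm, h2, rfl⟩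

lemma Dset_eq_empty {m : ℕ} (h2 : ¬ 2 ∣ m) (h3 : ¬ 3 ∣ m) : Dset m = ∅ := by
  ext g
  simp only [Dset, Set.mem_setOf_eq, Set.mem_empty_iff_false, iff_false]
  rintro ⟨d, hd, -, -, hdvd, -⟩
  simp only [Finset.mem_insert, Finset.mem_singleton] at hd
  rcases hd with rfl | rfl
  · exact h2 hdvd
  · exact h3 hdvd

lemma Dset_zero_elim {m : ℕ} (h : (0:ℕ) ∈ Dset m) :
    (2 ∣ m ∧ grundy {1} {2,3} (m/2) = 0) ∨ (3 ∣ m ∧ grundy {1} {2,3} (m/3) = 0) := by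
  obtain ⟨d, hd, -, -, hdvd, hval⟩ := h
  simp only [Finset.mem_insert, Finset.mem_singleton] at hd
  rcases hd with rfl | rfl
  · exact Or.inl ⟨hdvd, hval.symm⟩
  · exact Or.inr ⟨hdvd, hval.symm⟩

-- grundy unfolding
lemma grundy_eq (m : ℕ) (hm : 0 < m) :
    grundy {1} {2,3} m = mex ({grundy {1} {2,3} (m-1)} ∪ Dset m) := by
  conv_lhs => rw [grundy]
  congr 1
  ext g
  simp only [Finset.mem_coe, Finset.mem_image, Finset.mem_attach, true_and,
    Subtype.exists, Set.mem_union, Set.mem_singleton_iff, Dset, Set.mem_setOf_eq]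
  constructor
  · rintro ⟨a, ha, rfl⟩
    simp only [followers, Finset.mem_union, Finset.mem_image, Finset.mem_filter,
      Finset.mem_singleton, Finset.mem_insert] at ha
    rcases ha with ⟨s, ⟨hs1, -, hs2⟩, rfl⟩ | ⟨d, ⟨hd1, hd2, hd3, hd4⟩, rfl⟩
    · subst hs1; exact Or.inl rfl
    · exact Or.inr ⟨d, by simpa using hd1, hd2, hd3, hd4, rfl⟩
  · rintro (rfl | ⟨d, hd, h2, h0, hdvd, rfl⟩)
    · refine ⟨m - 1, ?_, rfl⟩
      simp only [followers, Finset.mem_union, Finset.mem_image, Finset.mem_filter,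
        Finset.mem_singleton]
      exact Or.inl ⟨1, ⟨rfl, by omega⟩, rfl⟩
    · refine ⟨m / d, ?_, rfl⟩
      simp only [followers, Finset.mem_union, Finset.mem_image, Finset.mem_filter]
      exact Or.inr ⟨d, ⟨hd, h2, h0, hdvd⟩, rfl⟩

lemma G_ne_zero_of_pred_zero {t : ℕ} (ht : 0 < t) (h : grundy {1} {2,3} (t-1) = 0) :
    grundy {1} {2,3} t ≠ 0 := by
  rw [grundy_eq t ht]
  exact mex_ne_zero (union_Dset_finite _ _) (Or.inl (by simp [h]))

lemma guessSeq_eq (n : ℕ) (σ : ℕ → ℕ) (m : ℕ) (hm : n + 1 ≤ m) :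
    guessSeq {1} {2,3} n σ m = mex ({guessSeq {1} {2,3} n σ (m-1)} ∪ Dset m) := by
  conv_lhs => rw [guessSeq]
  rw [if_neg (by simp only [Finset.sup_singleton, id]; omega)]
  congr 1
  have hsub : (↑((({1} : Finset ℕ).filter fun t => 0 < t ∧ t ≤ m).attach.image
      fun t => guessSeq {1} {2,3} n σ (m - t.1)) : Set ℕ)
      = {guessSeq {1} {2,3} n σ (m-1)} := by
    ext g
    simp only [Finset.mem_coe, Finset.mem_image, Finset.mem_attach, true_and,
      Subtype.exists, Set.mem_singleton_iff, Finset.mem_filter, Finset.mem_singleton]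
    constructor
    · rintro ⟨a, ⟨rfl, -, -⟩, rfl⟩
      rfl
    · rintro rfl
      exact ⟨1, ⟨rfl, by omega⟩, rfl⟩
  rw [hsub]
  rfl

lemma guess_propagate {n : ℕ} {σ σ' : ℕ → ℕ} {m0 : ℕ} (hm0 : n + 1 ≤ m0)
    (hbase : guessSeq {1} {2,3} n σ m0 = guessSeq {1} {2,3} n σ' m0) :
    ∀ j, guessSeq {1} {2,3} n σ (m0 + j) = guessSeq {1} {2,3} n σ' (m0 + j) := by
  intro j
  induction j with
  | zero => exact hbase
  | succ j ih =>
      have h1 : m0 + (j + 1) = (m0 + j) + 1 := rfl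
      rw [h1, guessSeq_eq n σ _ (by omega), guessSeq_eq n σ' _ (by omega)]
      rw [show m0 + j + 1 - 1 = m0 + j from by omega, ih]

lemma exists_zero (A : ℕ) :
    ∃ h, A ≤ h ∧ h ≤ A + 20 ∧ h % 3 ≠ 1 ∧ grundy {1} {2,3} h = 0 := by
  by_contra hcon
  push_neg at hcon
  set k := 6 * ((A + 9) / 12) + 5 with hk
  -- step 1 : G (2k) = 0
  have h1 : grundy {1} {2,3} (2*k) = 0 := by
    have hne := hcon (2*k+1) (by omega) (by omega) (by omega)
    rw [grundy_eq _ (by omega), Dset_eq_empty (by omega) (by omega)] at hne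
    have h0 := zero_mem_of_mex_ne_zero hne
    simp only [Set.union_empty, Set.mem_singleton_iff] at h0
    rw [show 2*k+1-1 = 2*k from by omega] at h0
    exact h0.symm
  -- step 2 : G k ≠ 0
  have h2 : grundy {1} {2,3} k ≠ 0 := by
    intro h0
    have hmem : (0:ℕ) ∈ ({grundy {1} {2,3} (2*k-1)} : Set ℕ) ∪ Dset (2*k) := by
      refine Or.inr ?_
      have hm := mem_Dset_two (show 0 < 2*k by omega) ⟨k, rfl⟩
      rw [show 2*k/2 = k from by omega, h0] at hm
      exact hm
    have := mex_ne_zero (union_Dset_finite _ _) hmem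
    rw [← grundy_eq _ (by omega)] at this
    exact this h1
  -- step 3 : G ((2k-4)/2) = 0 ∨ G ((2k-4)/3) = 0
  have h3 : grundy {1} {2,3} ((2*k-4)/2) = 0 ∨ grundy {1} {2,3} ((2*k-4)/3) = 0 := by
    have hne := hcon (2*k-4) (by omega) (by omega) (by omega)
    have hpred := hcon (2*k-5) (by omega) (by omega) (by omega)
    rw [grundy_eq _ (by omega)] at hne
    rcases zero_mem_of_mex_ne_zero hne with h0 | h0
    · rw [Set.mem_singleton_iff, show 2*k-4-1 = 2*k-5 from by omega] at h0
      exact absurd h0.symm hpred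
    · rcases Dset_zero_elim h0 with ⟨-, h⟩ | ⟨-, h⟩
      · exact Or.inl h
      · exact Or.inr h
  -- step 4 : G ((2k-4)/3) ≠ 0
  have h4 : grundy {1} {2,3} ((2*k-4)/3) ≠ 0 := by
    have hA := hcon (2*k-7) (by omega) (by omega) (by omega)
    have hB := hcon (2*k-8) (by omega) (by omega) (by omega)
    rw [grundy_eq _ (by omega)] at hA
    have ht1 : grundy {1} {2,3} ((2*k-7)/3) = 0 := by
      rcases zero_mem_of_mex_ne_zero hA with h0 | h0
      · rw [Set.mem_singleton_iff, show 2*k-7-1 = 2*k-8 from by omega] at h0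
        exact absurd h0.symm hB
      · rcases Dset_zero_elim h0 with ⟨hd, -⟩ | ⟨-, h⟩
        · exact absurd hd (by omega)
        · exact h
    rw [show (2*k-4)/3 = (2*k-7)/3 + 1 from by omega]
    apply G_ne_zero_of_pred_zero (by omega)
    rw [show (2*k-7)/3 + 1 - 1 = (2*k-7)/3 from by omega]
    exact ht1
  -- step 5 : G (k-2) = 0, G (k-1) ≠ 0
  have h5 : grundy {1} {2,3} (k-2) = 0 := by
    rcases h3 with h | h
    · rwa [show (2*k-4)/2 = k-2 from by omega] at h
    · exact absurd h h4
  have h6 : grundy {1} {2,3} (k-1) ≠ 0 := by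
    apply G_ne_zero_of_pred_zero (by omega)
    rw [show k-1-1 = k-2 from by omega]
    exact h5
  -- step 6 : G k = 0, contradiction
  apply h2
  rw [grundy_eq _ (by omega), Dset_eq_empty (by omega) (by omega)]
  apply mex_eq_zero
  simp only [Set.union_empty, Set.mem_singleton_iff]
  rw [show k-1 = k-1 from rfl]
  exact fun he => h6 he.symm

/-- Convergence occurs in `c` steps at starting position `n`: any two guess sequences from `n`
agree on all positions `m` with `n + c ≤ m < n + c + max S`. -/
def ConvergesIn (S D : Finset ℕ) (n c : ℕ) : Prop :=
  ∀ σ σ' : ℕ → ℕ, IsGuessSeed S D n σ → IsGuessSeed S D n σ' →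
    ∀ m, n + c ≤ m → m < n + c + S.sup id → guessSeq S D n σ m = guessSeq S D n σ' m

/-- In i-MARK({1},{2,3}), convergence occurs in at most 64 steps at every starting position. -/
theorem imark_one_two_three_convergence (n : ℕ) :
    ∃ c' : ℕ, 1 ≤ c' ∧ c' ≤ 64 ∧ ConvergesIn {1} {2, 3} n c' := by
  refine ⟨64, by norm_num, by norm_num, ?_⟩
  intro σ σ' _ _ m hm1 hm2
  simp only [Finset.sup_singleton, id] at hm2
  have hm : m = n + 64 := by omega
  subst hm
  obtain ⟨h, hA, hB, h3, h0⟩ := exists_zero ((n+2)/2)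
  have hm'1 : n + 1 ≤ 2*h := by omega
  have hm'2 : 2*h + 1 ≤ n + 64 := by omega
  have key : ∀ τ : ℕ → ℕ, guessSeq {1} {2,3} n τ (2*h+1) = 0 := by
    intro τ
    have hv : guessSeq {1} {2,3} n τ (2*h) ≠ 0 := by
      rw [guessSeq_eq n τ _ hm'1]
      apply mex_ne_zero (union_Dset_finite _ _)
      refine Or.inr ?_
      have hm := mem_Dset_two (show 0 < 2*h by omega) ⟨h, rfl⟩
      rwa [show 2*h/2 = h from by omega, h0] at hm
    rw [guessSeq_eq n τ _ (by omega), Dset_eq_empty (by omega) (by omega)]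
    apply mex_eq_zero
    simp only [Set.union_empty, Set.mem_singleton_iff]
    rw [show 2*h+1-1 = 2*h from by omega]
    exact fun he => hv he.symm
  have hbase := (key σ).trans (key σ').symm
  have hprop := guess_propagate (show n + 1 ≤ 2*h+1 by omega) hbase (n + 64 - (2*h+1))
  rwa [show 2*h+1 + (n + 64 - (2*h+1)) = n + 64 from by omega] at hprop
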